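/- For d + 1 ≤ n ≤ 2d, the number f_d(n) of minimal permutations of length n with d descents equals the sum of F_{a₁,…,a_{n−d}}(n) over all sequences (a₁,…,a_{n−d}) of integers with a_i ≥ 2 for all 1 ≤ i ≤ n−d and a₁ + a₂ + ⋯ + a_{n−d} = n. -/

import Mathlib

/-- `i` (1-based) is a descent of the word `w`, i.e. `1 ≤ i ≤ w.length - 1` and
`w_i > w_{i+1}` (1-based entries). -/
def DescentAt (w : List ℕ) (i : ℕ) : Prop :=
  1 ≤ i ∧ i + 1 ≤ w.length ∧ w.getD i 0 < w.getD (i - 1) 0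

instance (w : List ℕ) (i : ℕ) : Decidable (DescentAt w i) :=
  inferInstanceAs (Decidable (_ ∧ _ ∧ _))

/-- `i` (1-based) is an ascent of the word `w`. -/
def AscentAt (w : List ℕ) (i : ℕ) : Prop :=
  1 ≤ i ∧ i + 1 ≤ w.length ∧ w.getD (i - 1) 0 < w.getD i 0

instance (w : List ℕ) (i : ℕ) : Decidable (AscentAt w i) :=
  inferInstanceAs (Decidable (_ ∧ _ ∧ _))

/-- The set of descent positions of `w`. -/
def descents (w : List ℕ) : Finset ℕ :=
  (Finset.range w.length).filter (fun i => DescentAt w i)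

/-- `w` is a permutation of `[n] = {1,…,n}`, written as a word. -/
def IsPermWord (n : ℕ) (w : List ℕ) : Prop :=
  w.length = n ∧ w.Nodup ∧ ∀ x ∈ w, 1 ≤ x ∧ x ≤ n

/-- Two words of distinct entries are in the same relative order. -/
def SameRelOrder (u v : List ℕ) : Prop :=
  u.length = v.length ∧
    ∀ p q, p < u.length → q < u.length →
      (u.getD p 0 < u.getD q 0 ↔ v.getD p 0 < v.getD q 0)

/-- `σ ≺ w`: the word `w` contains the pattern `σ`, i.e. `w` has a subsequence
in the same relative order as `σ`. -/
def ContainsPattern (σ w : List ℕ) : Prop :=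
  ∃ s : List ℕ, s.Sublist w ∧ SameRelOrder s σ

/-- `w` is a minimal permutation with `d` descents: it has exactly `d` descents and
no strictly shorter permutation with exactly `d` descents occurs in it as a pattern. -/
def MinimalPerm (d : ℕ) (w : List ℕ) : Prop :=
  (descents w).card = d ∧
    ∀ (m : ℕ) (σ : List ℕ), IsPermWord m σ → m < w.length →
      (descents σ).card = d → ¬ ContainsPattern σ w

/-- `w` is a minimal permutation (with its own number of descents). -/
def IsMinimal (w : List ℕ) : Prop :=
  MinimalPerm (descents w).card w

/-- The set `𝓕_d(n)` of minimal permutations of length `n` with `d` descents. -/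
def minimalPerms (d n : ℕ) : Set (List ℕ) :=
  {w | IsPermWord n w ∧ MinimalPerm d w}

/-- `f_d(n) = |𝓕_d(n)|`. -/
noncomputable def fCount (d n : ℕ) : ℕ :=
  (minimalPerms d n).ncard

/-- `w` has ascent sequence `a`: `w` decomposes into maximal strictly decreasing
runs whose lengths, from left to right, are the entries of `a` (maximality is
expressed by the junctions between consecutive runs being ascents). -/
def HasAscentSeq (w a : List ℕ) : Prop :=
  ∃ bs : List (List ℕ), bs.flatten = w ∧ bs.map List.length = a ∧
    (∀ b ∈ bs, b ≠ [] ∧ List.Chain' (fun x y => x > y) b) ∧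
    List.Chain' (fun b c => ∃ x ∈ b.getLast?, ∃ y ∈ c.head?, x < y) bs

/-- The set `𝓕_{a₁,…,a_k}(n)` of minimal permutations of length `n` with
ascent sequence `a = (a₁,…,a_k)`. -/
def minimalPermsAsc (n : ℕ) (a : List ℕ) : Set (List ℕ) :=
  {w | IsPermWord n w ∧ IsMinimal w ∧ HasAscentSeq w a}

/-- `F_{a₁,…,a_k}(n) = |𝓕_{a₁,…,a_k}(n)|`. -/
noncomputable def FCount (n : ℕ) (a : List ℕ) : ℕ :=
  (minimalPermsAsc n a).ncard

/-- A standard filling of a given cell set by `1,…,N`: zero off the cells,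
a bijection from the cells onto `{1,…,N}`, strictly increasing along rows
(second coordinate) and columns (first coordinate). -/
def IsTableauOn (cell : ℕ → ℕ → Prop) (N : ℕ) (T : ℕ → ℕ → ℕ) : Prop :=
  (∀ r c, ¬ cell r c → T r c = 0) ∧
  (∀ r c, cell r c → 1 ≤ T r c ∧ T r c ≤ N) ∧
  (∀ r c r' c', cell r c → cell r' c' → T r c = T r' c' → r = r' ∧ c = c') ∧
  (∀ v, 1 ≤ v → v ≤ N → ∃ r c, cell r c ∧ T r c = v) ∧
  (∀ r c, cell r c → cell r (c + 1) → T r c < T r (c + 1)) ∧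
  (∀ r c, cell r c → cell (r + 1) c → T r c < T (r + 1) c)

/-- The cells of the skew shape `λ/μ` (rows indexed from `0` downward,
columns from `0` rightward): row `r` contains columns `μ_r ≤ c < λ_r`. -/
def skewCell (l m : List ℕ) (r c : ℕ) : Prop :=
  r < l.length ∧ m.getD r 0 ≤ c ∧ c < l.getD r 0

/-- A standard skew Young tableau of shape `λ/μ`. -/
def IsSkewSYT (l m : List ℕ) (T : ℕ → ℕ → ℕ) : Prop :=
  IsTableauOn (skewCell l m) (l.sum - m.sum) T

/-- `f^{λ/μ}`, the number of standard skew Young tableaux of shape `λ/μ`. -/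
noncomputable def skewSYTCount (l m : List ℕ) : ℕ :=
  Nat.card {T : ℕ → ℕ → ℕ // IsSkewSYT l m T}

/-- The row index of the top cell of column `c` in the 2-regular skew shape
with column lengths `a₁,…,a_k` (columns normalized so that the last column
starts in row `0`; consecutive columns overlap in exactly two rows). -/
def colTop (a : List ℕ) (c : ℕ) : ℕ :=
  (a.drop (c + 1)).sum - 2 * (a.length - 1 - c)

/-- The cells of the 2-regular skew shape with column lengths `a₁,…,a_k`:
column `c` occupies the `a_c` rows starting at `colTop a c`, so that any two
consecutive columns overlap in exactly two rows. -/
def twoRegCell (a : List ℕ) (r c : ℕ) : Prop :=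
  c < a.length ∧ colTop a c ≤ r ∧ r < colTop a c + a.getD c 0

/-- A 2-regular skew tableau with column lengths `a₁,…,a_k`: a standard filling
of the 2-regular skew shape by `1,…,a₁+⋯+a_k`. -/
def Is2RegularTableau (a : List ℕ) (T : ℕ → ℕ → ℕ) : Prop :=
  IsTableauOn (twoRegCell a) a.sum T

/-- `𝓜_{2n+1,2i}`: minimal permutations of length `2n+1` with `n+1` descents whose
unique pair of consecutive descents is `(2i-1, 2i)`. -/
def Mset (n i : ℕ) : Set (List ℕ) :=
  {w | IsPermWord (2 * n + 1) w ∧ MinimalPerm (n + 1) w ∧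
    DescentAt w (2 * i - 1) ∧ DescentAt w (2 * i) ∧
    ∀ j, DescentAt w j → DescentAt w (j + 1) → j = 2 * i - 1}

/-- Elementary Knuth transformations on words of distinct integers. -/
inductive KnuthStep : List ℕ → List ℕ → Prop
  | k1 (u v : List ℕ) (x y z : ℕ) (hxy : x < y) (hyz : y < z) :
      KnuthStep (u ++ [x, z, y] ++ v) (u ++ [z, x, y] ++ v)
  | k2 (u v : List ℕ) (x y z : ℕ) (hxy : x < y) (hyz : y < z) :
      KnuthStep (u ++ [y, x, z] ++ v) (u ++ [y, z, x] ++ v)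

/-- Knuth equivalence of words. -/
def KnuthEquiv : List ℕ → List ℕ → Prop := Relation.EqvGen KnuthStep

section Aux

def dCount : List ℕ → ℕ
  | x :: y :: t => (if y < x then 1 else 0) + dCount (y :: t)
  | _ => 0

def runs : List ℕ → List (List ℕ)
  | [] => []
  | x :: l =>
    match runs l with
    | [] => [[x]]
    | b :: bs => if b.headD 0 < x then (x :: b) :: bs else [x] :: b :: bs

theorem runs_cons_nil {l : List ℕ} (x : ℕ) (h : runs l = []) : runs (x :: l) = [[x]] := by
  rw [runs, h]

theorem runs_cons_cons {l b bs} (x : ℕ) (h : runs l = b :: bs) :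
    runs (x :: l) = if b.headD 0 < x then (x :: b) :: bs else [x] :: b :: bs := by
  rw [runs, h]

theorem runs_flatten : ∀ l : List ℕ, (runs l).flatten = l := by
  intro l
  induction l with
  | nil => rfl
  | cons x l ih =>
    rcases h : runs l with _ | ⟨b, bs⟩
    · rw [runs_cons_nil x h]
      rw [h] at ih; simp_all
    · rw [runs_cons_cons x h]
      rw [h] at ih
      split <;> simp_all

theorem runs_ne_nil {l : List ℕ} (h : l ≠ []) : runs l ≠ [] := by
  intro hc
  apply h
  rw [← runs_flatten l, hc]
  rfl

theorem runs_blocks : ∀ l : List ℕ, ∀ b ∈ runs l, b ≠ [] ∧ List.Chain' (fun x y => x > y) b := by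
  intro l
  induction l with
  | nil => simp [runs]
  | cons x l ih =>
    rcases h : runs l with _ | ⟨b, bs⟩
    · rw [runs_cons_nil x h]; simp; exact List.isChain_singleton x
    · rw [runs_cons_cons x h]
      rw [h] at ih
      split
      · rename_i hlt
        intro c hc
        rcases List.mem_cons.1 hc with rfl | hc
        · obtain ⟨hb, hch⟩ := ih b (by simp)
          refine ⟨by simp, ?_⟩
          rw [List.Chain', List.isChain_cons]
          refine ⟨?_, hch⟩
          intro y hy
          rcases b with _ | ⟨z, b'⟩
          · simp at hb
          · simp at hy; subst hy; simpa using hlt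
        · exact ih c (by simp [hc])
      · intro c hc
        rcases List.mem_cons.1 hc with rfl | hc
        · exact ⟨by simp, List.isChain_singleton x⟩
        · exact ih c hc

/-- head of first block of `runs l` is head of `l` -/
theorem runs_headD {l : List ℕ} {b : List ℕ} {bs : List (List ℕ)} (h : runs l = b :: bs) :
    b.headD 0 = l.headD 0 ∧ b ≠ [] := by
  have hb := (runs_blocks l b (by rw [h]; simp)).1
  have hf := runs_flatten l
  rw [h] at hf
  rcases b with _ | ⟨z, b'⟩
  · simp at hb
  · constructor
    · simp [← hf]
    · simp

abbrev Rjun (b c : List ℕ) : Prop := ∃ x ∈ b.getLast?, ∃ y ∈ c.head?, x < y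

theorem runs_chain : ∀ l : List ℕ, l.Nodup → List.Chain' Rjun (runs l) := by
  intro l
  induction l with
  | nil => simp [runs]; exact List.isChain_nil
  | cons x l ih =>
    intro hnd
    have hnd' : l.Nodup := hnd.of_cons
    have hx : x ∉ l := (List.nodup_cons.1 hnd).1
    rcases h : runs l with _ | ⟨b, bs⟩
    · rw [runs_cons_nil x h]; exact List.isChain_singleton _
    · rw [runs_cons_cons x h]
      have hch := ih hnd'
      rw [h] at hch
      obtain ⟨hbhead, hbne⟩ := runs_headD h
      split
      · rename_i hlt
        rw [List.Chain', List.isChain_cons] at hch ⊢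
        refine ⟨?_, hch.2⟩
        intro c hc
        obtain ⟨u, hu, v, hv, huv⟩ := hch.1 c hc
        refine ⟨u, ?_, v, hv, huv⟩
        rcases b with _ | ⟨z, b'⟩
        · simp at hbne
        · simpa using hu
      · rename_i hnlt
        rw [List.Chain', List.isChain_cons]
        refine ⟨?_, hch⟩
        intro c hc
        simp only [List.head?_cons, Option.mem_def, Option.some.injEq] at hc
        subst hc
        rcases b with _ | ⟨z, b'⟩
        · simp at hbne
        · refine ⟨x, by simp, z, by simp, ?_⟩
          have hne : x ≠ z := by
            intro hxz
            apply hx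
            rw [hxz, ← runs_flatten l, h]
            simp
          simp only [List.headD_cons] at hnlt
          omega

theorem runs_append : ∀ (b t : List ℕ), b ≠ [] → List.Chain' (fun x y => x > y) b →
    (∀ y ∈ t.head?, ∃ x ∈ b.getLast?, x < y) → runs (b ++ t) = b :: runs t := by
  intro b
  induction b with
  | nil => intro t h; exact absurd rfl h
  | cons z b' ih =>
    intro t _ hc hj
    rcases b' with _ | ⟨z', b''⟩
    · -- b = [z]
      rcases t with _ | ⟨y, t'⟩
      · simp [runs]
      · simp only [List.singleton_append]
        rcases h : runs (y :: t') with _ | ⟨c, cs⟩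
        · exact absurd h (runs_ne_nil (by simp))
        · rw [runs_cons_cons z h]
          obtain ⟨hch, hcne⟩ := runs_headD h
          obtain ⟨x, hx, hlt⟩ := hj y (by simp)
          simp only [List.getLast?_singleton, Option.mem_def, Option.some.injEq] at hx
          subst hx
          have : ¬ c.headD 0 < z := by
            rw [hch]; simpa using Nat.not_lt.2 (Nat.le_of_lt hlt)
          rw [if_neg this]
    · -- b = z :: z' :: b''
      have hgl : (z :: z' :: b'').getLast? = (z' :: b'').getLast? := by
        simp [List.getLast?_cons_cons]
      have ihh : runs ((z' :: b'') ++ t) = (z' :: b'') :: runs t := by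
        apply ih
        · simp
        · exact hc.tail
        · intro y hy
          obtain ⟨x, hx, hlt⟩ := hj y hy
          exact ⟨x, by rw [← hgl]; exact hx, hlt⟩
      have : (z :: z' :: b'') ++ t = z :: ((z' :: b'') ++ t) := by simp
      rw [this, runs_cons_cons z ihh]
      have hzz : (z' :: b'').headD 0 < z := by
        have := List.isChain_cons_cons.1 hc
        simpa using this.1
      rw [if_pos (by simpa using hzz)]

theorem eq_runs : ∀ bs : List (List ℕ),
    (∀ b ∈ bs, b ≠ [] ∧ List.Chain' (fun x y => x > y) b) →
    List.Chain' Rjun bs → bs = runs bs.flatten := by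
  intro bs
  induction bs with
  | nil => simp [runs]
  | cons b bs' ih =>
    intro hb hch
    have hflat : (b :: bs').flatten = b ++ bs'.flatten := by simp
    rw [hflat, runs_append b bs'.flatten (hb b (by simp)).1 (hb b (by simp)).2]
    · rw [← ih (fun c hc => hb c (by simp [hc])) hch.tail]
    · intro y hy
      rcases bs' with _ | ⟨c, cs⟩
      · simp at hy
      · have hcne : c ≠ [] := (hb c (by simp)).1
        have hhead : (c :: cs).flatten.head? = c.head? := by
          rcases c with _ | ⟨u, c'⟩
          · simp at hcne
          · simp
        rw [List.flatten] at hy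
        obtain ⟨x, hx, v, hv, hlt⟩ := (List.isChain_cons_cons.1 hch).1
        rcases c with _ | ⟨u, c'⟩
        · simp at hcne
        · simp only [List.head?_cons, Option.mem_def, Option.some.injEq] at hv
          subst hv
          simp only [List.append_eq, List.cons_append, List.head?_cons, Option.mem_def, Option.some.injEq] at hy
          subst hy
          exact ⟨x, hx, hlt⟩

theorem dCount_block : ∀ b : List ℕ, b ≠ [] → List.Chain' (fun x y => x > y) b →
    dCount b + 1 = b.length := by
  intro b
  induction b with
  | nil => intro h; exact absurd rfl h
  | cons z b' ih =>
    intro _ hc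
    rcases b' with _ | ⟨z', b''⟩
    · simp [dCount]
    · have hzz : z' < z := by simpa using (List.isChain_cons_cons.1 hc).1
      have := ih (by simp) hc.tail
      rw [dCount, if_pos hzz]
      simp at this ⊢
      omega

theorem dCount_append : ∀ (b t : List ℕ), b ≠ [] →
    (∀ y ∈ t.head?, ∃ x ∈ b.getLast?, x < y) → dCount (b ++ t) = dCount b + dCount t := by
  intro b
  induction b with
  | nil => intro t h; exact absurd rfl h
  | cons z b' ih =>
    intro t _ hj
    rcases b' with _ | ⟨z', b''⟩
    · rcases t with _ | ⟨y, t'⟩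
      · simp [dCount]
      · obtain ⟨x, hx, hlt⟩ := hj y (by simp)
        simp only [List.getLast?_singleton, Option.mem_def, Option.some.injEq] at hx
        subst hx
        simp only [List.singleton_append]
        rw [dCount, if_neg (by omega)]
        simp [dCount]
    · have hgl : (z :: z' :: b'').getLast? = (z' :: b'').getLast? := by
        simp [List.getLast?_cons_cons]
      have ihh := ih t (by simp) (fun y hy => by rw [← hgl]; exact hj y hy)
      have h1 : (z :: z' :: b'') ++ t = z :: z' :: (b'' ++ t) := by simp
      rw [h1, dCount, dCount]
      have h2 : z' :: (b'' ++ t) = (z' :: b'') ++ t := by simp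
      rw [h2, ihh]
      omega

theorem dCount_flatten : ∀ bs : List (List ℕ),
    (∀ b ∈ bs, b ≠ [] ∧ List.Chain' (fun x y => x > y) b) →
    List.Chain' Rjun bs → dCount bs.flatten + bs.length = bs.flatten.length := by
  intro bs
  induction bs with
  | nil => simp [dCount]
  | cons b bs' ih =>
    intro hb hch
    have hbne := (hb b (by simp)).1
    have hbd := dCount_block b hbne (hb b (by simp)).2
    have hflat : (b :: bs').flatten = b ++ bs'.flatten := by simp
    have hj : ∀ y ∈ bs'.flatten.head?, ∃ x ∈ b.getLast?, x < y := by
      intro y hy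
      rcases bs' with _ | ⟨c, cs⟩
      · simp at hy
      · have hcne : c ≠ [] := (hb c (by simp)).1
        obtain ⟨x, hx, v, hv, hlt⟩ := (List.isChain_cons_cons.1 hch).1
        rcases c with _ | ⟨u, c'⟩
        · simp at hcne
        · simp only [List.head?_cons, Option.mem_def, Option.some.injEq] at hv
          subst hv
          simp only [List.flatten_cons, List.cons_append, List.head?_cons,
            Option.mem_def, Option.some.injEq] at hy
          subst hy
          exact ⟨x, hx, hlt⟩
    have ihh := ih (fun c hc => hb c (by simp [hc])) hch.tail
    rw [hflat, dCount_append b bs'.flatten hbne hj]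
    simp only [List.length_cons, List.length_append]
    omega

theorem descentAt_cons_iff {w : List ℕ} {x : ℕ} {i : ℕ} (hi : 2 ≤ i) :
    DescentAt (x :: w) i ↔ DescentAt w (i - 1) := by
  obtain ⟨j, rfl⟩ : ∃ j, i = j + 2 := ⟨i - 2, by omega⟩
  unfold DescentAt
  have e1 : (x :: w).getD (j + 2) 0 = w.getD (j + 1) 0 := by simp
  have e2 : j + 2 - 1 = j + 1 := by omega
  have e3 : (x :: w).getD (j + 1) 0 = w.getD j 0 := by simp
  have e4 : j + 1 - 1 = j := by omega
  rw [e1, e2, e3, e4]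
  simp only [List.length_cons]
  omega

theorem mem_descents {w : List ℕ} {i : ℕ} : i ∈ descents w ↔ DescentAt w i := by
  unfold descents
  simp only [Finset.mem_filter, Finset.mem_range]
  constructor
  · exact fun h => h.2
  · intro h; exact ⟨by have := h.2.1; omega, h⟩

theorem card_descents_cons (x : ℕ) (w : List ℕ) :
    (descents (x :: w)).card = (if DescentAt (x :: w) 1 then 1 else 0) + (descents w).card := by
  have hset : descents (x :: w) =
      (if DescentAt (x :: w) 1 then ({1} : Finset ℕ) else ∅) ∪ (descents w).image (· + 1) := by
    ext i
    rw [mem_descents]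
    simp only [Finset.mem_union, Finset.mem_image]
    constructor
    · intro h
      have h1 := h.1
      rcases Nat.lt_or_ge i 2 with hi | hi
      · have : i = 1 := by omega
        subst this
        left; rw [if_pos h]; simp
      · right
        refine ⟨i - 1, mem_descents.2 ((descentAt_cons_iff hi).1 h), by omega⟩
    · intro h
      rcases h with h | ⟨j, hj, rfl⟩
      · split at h
        · rename_i hd
          simp only [Finset.mem_singleton] at h
          subst h; exact hd
        · simp at h
      · have hj' := mem_descents.1 hj
        have : 2 ≤ j + 1 := by have := hj'.1; omega
        rw [descentAt_cons_iff this]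
        simpa using hj'
  rw [hset, Finset.card_union_of_disjoint, Finset.card_image_of_injective _ (add_left_injective 1)]
  · congr 1
    split <;> simp
  · rw [Finset.disjoint_left]
    intro i hi him
    simp only [Finset.mem_image] at him
    obtain ⟨j, hj, rfl⟩ := him
    have := (mem_descents.1 hj).1
    split at hi
    · simp only [Finset.mem_singleton] at hi; omega
    · simp at hi

theorem descents_card_eq_dCount : ∀ w : List ℕ, (descents w).card = dCount w := by
  intro w
  induction w with
  | nil =>
    rw [show dCount [] = 0 from rfl]
    rw [Finset.card_eq_zero]
    ext i
    simp [mem_descents, DescentAt]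
  | cons x w ih =>
    rcases w with _ | ⟨y, t⟩
    · rw [show dCount [x] = 0 from rfl, Finset.card_eq_zero]
      ext i
      simp only [Finset.notMem_empty, iff_false, mem_descents]
      intro h
      have := h.1; have := h.2.1
      simp at this
      omega
    · rw [card_descents_cons, ih]
      have hd1 : DescentAt (x :: y :: t) 1 ↔ y < x := by
        unfold DescentAt
        simp
      rw [dCount]
      by_cases h : y < x
      · rw [if_pos (hd1.2 h), if_pos h]
      · rw [if_neg (fun hc => h (hd1.1 hc)), if_neg h]

theorem descents_eq_of_sameRelOrder {u v : List ℕ} (h : SameRelOrder u v) :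
    descents u = descents v := by
  obtain ⟨hlen, hcmp⟩ := h
  ext i
  rw [mem_descents, mem_descents]
  unfold DescentAt
  constructor
  · rintro ⟨h1, h2, h3⟩
    exact ⟨h1, by omega, (hcmp i (i - 1) (by omega) (by omega)).1 h3⟩
  · rintro ⟨h1, h2, h3⟩
    exact ⟨h1, by omega, (hcmp i (i - 1) (by omega) (by omega)).2 h3⟩

/-- standardization -/
def std (s : List ℕ) : List ℕ := s.map (fun x => s.countP (fun z => decide (z ≤ x)))

theorem countP_le_lt {s : List ℕ} {x y : ℕ} (hxy : x < y) (hy : y ∈ s) :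
    s.countP (fun z => decide (z ≤ x)) < s.countP (fun z => decide (z ≤ y)) := by
  induction s with
  | nil => simp at hy
  | cons a t ih =>
    rw [List.countP_cons, List.countP_cons]
    have hmono : t.countP (fun z => decide (z ≤ x)) ≤ t.countP (fun z => decide (z ≤ y)) :=
      List.countP_mono_left (fun z _ hz => by simp only [decide_eq_true_eq] at hz ⊢; omega)
    rcases List.mem_cons.1 hy with rfl | hy'
    · have h1 : ¬ (decide (y ≤ x) = true) := by simp; omega
      have h2 : decide (y ≤ y) = true := by simp
      rw [if_neg h1, if_pos h2]
      omega
    · have := ih hy'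
      have hite : (if decide (a ≤ x) = true then 1 else 0) ≤
          (if decide (a ≤ y) = true then 1 else 0) := by
        by_cases h : a ≤ x
        · have : a ≤ y := by omega
          simp [h, this]
        · simp [h]
      omega

theorem std_getD {s : List ℕ} {p : ℕ} (hp : p < s.length) :
    (std s).getD p 0 = s.countP (fun z => decide (z ≤ s.getD p 0)) := by
  rw [List.getD_eq_getElem (std s) 0 (by simpa [std] using hp), List.getD_eq_getElem s 0 hp]
  simp [std]

theorem sameRelOrder_std (s : List ℕ) : SameRelOrder s (std s) := by
  refine ⟨by simp [std], ?_⟩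
  intro p q hp hq
  rw [std_getD hp, std_getD hq]
  have hxm : s.getD p 0 ∈ s := by
    rw [List.getD_eq_getElem s 0 hp]; exact List.getElem_mem _
  have hym : s.getD q 0 ∈ s := by
    rw [List.getD_eq_getElem s 0 hq]; exact List.getElem_mem _
  constructor
  · intro h; exact countP_le_lt h hym
  · intro h
    by_contra hxy
    push_neg at hxy
    rcases Nat.eq_or_lt_of_le hxy with heq | hlt
    · rw [heq] at h; omega
    · have := countP_le_lt hlt hxm; omega

theorem std_perm {s : List ℕ} (hnd : s.Nodup) : IsPermWord s.length (std s) := by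
  refine ⟨by simp [std], ?_, ?_⟩
  · apply List.Nodup.map_on ?_ ?_
    · intro x hx y hy hxy
      by_contra hne
      rcases Nat.lt_or_ge x y with h | h
      · have := countP_le_lt h hy; omega
      · have hlt : y < x := by omega
        have := countP_le_lt hlt hx; omega
    · exact hnd
  · intro v hv
    simp only [std, List.mem_map] at hv
    obtain ⟨x, hx, rfl⟩ := hv
    constructor
    · have : 0 < s.countP (fun z => decide (z ≤ x)) :=
        List.countP_pos_iff.2 ⟨x, hx, by simp⟩
      omega
    · exact List.countP_le_length

theorem no_short_pattern {d n : ℕ} {w : List ℕ} (hw : IsPermWord n w) (hm : MinimalPerm d w)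
    {s : List ℕ} (hs : s.Sublist w) (hlen : s.length < n) : dCount s ≠ d := by
  intro hd
  have hsnd : s.Nodup := hs.nodup hw.2.1
  have hrel := sameRelOrder_std s
  have hcard : (descents (std s)).card = d := by
    rw [← descents_eq_of_sameRelOrder hrel, descents_card_eq_dCount]; exact hd
  exact hm.2 s.length (std s) (std_perm hsnd) (by rw [hw.1]; exact hlen) hcard ⟨s, hs, hrel⟩

theorem hasAscentSeq_runs {w : List ℕ} (hnd : w.Nodup) :
    HasAscentSeq w ((runs w).map List.length) :=
  ⟨runs w, runs_flatten w, rfl, runs_blocks w, runs_chain w hnd⟩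

theorem hasAscentSeq_unique {w a : List ℕ} (h : HasAscentSeq w a) :
    a = (runs w).map List.length := by
  obtain ⟨bs, hf, hm, hb, hc⟩ := h
  rw [← hm, ← hf, ← eq_runs bs hb hc]

theorem dCount_of_hasAscentSeq {w a : List ℕ} (h : HasAscentSeq w a) :
    dCount w + a.length = w.length := by
  obtain ⟨bs, hf, hm, hb, hc⟩ := h
  have := dCount_flatten bs hb hc
  rw [hf] at this
  rw [← hm]
  simpa using this

theorem runs_two {d n : ℕ} {w : List ℕ} (hw : IsPermWord n w) (hm : MinimalPerm d w) :
    ∀ b ∈ runs w, 2 ≤ b.length := by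
  intro b hb
  by_contra hlt
  have hbne := (runs_blocks w b hb).1
  have hpos : 1 ≤ b.length := List.length_pos_iff.2 hbne
  obtain ⟨x, rfl⟩ : ∃ x, b = [x] := List.length_eq_one_iff.1 (by omega)
  obtain ⟨p, q, hpq⟩ := List.append_of_mem hb
  have hblocks := runs_blocks w
  have hchain := runs_chain w hw.2.1
  have hflat := runs_flatten w
  rw [hpq] at hblocks hchain hflat
  set s : List ℕ := p.flatten ++ q.flatten with hsdef
  have hsub : s.Sublist w := by
    rw [← hflat]
    simp only [List.flatten_append, List.flatten_cons, List.singleton_append]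
    exact ((q.flatten.sublist_cons_self x).append_left p.flatten)
  -- chain for p ++ q
  obtain ⟨hcp, hcq', hjp⟩ := List.isChain_append.1 hchain
  rw [List.isChain_cons] at hcq'
  have hch2 : List.Chain' Rjun (p ++ q) := by
    rw [List.Chain', List.isChain_append]
    refine ⟨hcp, hcq'.2, ?_⟩
    intro bb hbb cc hcc
    obtain ⟨u, hu, v, hv, huv⟩ := hjp bb hbb [x] (by simp)
    obtain ⟨u', hu', v', hv', huv'⟩ := hcq'.1 cc hcc
    simp only [List.head?_cons, Option.mem_def, Option.some.injEq] at hv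
    simp only [List.getLast?_singleton, Option.mem_def, Option.some.injEq] at hu'
    subst hv; subst hu'
    exact ⟨u, hu, v', hv', by omega⟩
  have hblocks2 : ∀ c ∈ p ++ q, c ≠ [] ∧ List.Chain' (fun x y => x > y) c := by
    intro c hc
    rcases List.mem_append.1 hc with h | h
    · exact hblocks c (List.mem_append_left _ h)
    · exact hblocks c (List.mem_append_right _ (List.mem_cons_of_mem _ h))
  have hd1 := dCount_flatten (p ++ [x] :: q) hblocks hchain
  have hd2 := dCount_flatten (p ++ q) hblocks2 hch2
  have hflen : (p ++ q).flatten = s := by simp [hsdef]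
  rw [hflat] at hd1
  rw [hflen] at hd2
  have hwlen : w.length = n := hw.1
  have hslen : s.length + 1 = w.length := by
    rw [← hflat, hsdef]; simp; omega
  have hdw : dCount w = d := by
    rw [← descents_card_eq_dCount]; exact hm.1
  have hlens : (p ++ [x] :: q).length = (p ++ q).length + 1 := by simp; omega
  exact no_short_pattern hw hm hsub (by omega) (by omega)

theorem permWords_finite (n : ℕ) : {w : List ℕ | IsPermWord n w}.Finite := by
  have hn : ∀ x : ℕ, min x n < n + 1 := fun x => by omega
  set f : List ℕ → List (Fin (n + 1)) := fun w => w.map (fun x => (⟨min x n, hn x⟩ : Fin (n + 1)))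
    with hf
  apply Set.Finite.of_finite_image (f := f)
  · apply (List.finite_length_eq (Fin (n + 1)) n).subset
    rintro _ ⟨w, hw, rfl⟩
    simp [hf, hw.1]
  · intro w hw w' hw' heq
    have key : ∀ u : List ℕ, IsPermWord n u → (f u).map Fin.val = u := by
      intro u hu
      rw [hf]
      rw [List.map_map]
      have : ∀ x ∈ u, (Fin.val ∘ (fun x => (⟨min x n, hn x⟩ : Fin (n + 1)))) x = id x := by
        intro x hx
        have := (hu.2.2 x hx).2
        simp only [Function.comp_apply, id_eq]
        omega
      rw [List.map_congr_left this, List.map_id]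
    rw [← key w hw, ← key w' hw', heq]

end Aux

/-- for `d + 1 ≤ n ≤ 2d`, `f_d(n)` is the sum of `F_{a₁,…,a_{n-d}}(n)` over
all sequences `(a₁,…,a_{n-d})` with every `aᵢ ≥ 2` and `a₁ + ⋯ + a_{n-d} = n`. -/
theorem fCount_eq_sum_FCount (d n : ℕ) (h1 : d + 1 ≤ n) (h2 : n ≤ 2 * d) :
    fCount d n =
      ∑ a ∈ (Finset.Nat.antidiagonalTuple (n - d) n).filter (fun a => ∀ i, 2 ≤ a i),
        FCount n (List.ofFn a) := by
  classical
  set k := n - d with hk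
  set S := (Finset.Nat.antidiagonalTuple k n).filter (fun a => ∀ i, 2 ≤ a i) with hS
  have hPW := permWords_finite n
  have hFfin : (minimalPerms d n).Finite := hPW.subset (fun w hw => hw.1)
  have hAfin : ∀ a : Fin k → ℕ, (minimalPermsAsc n (List.ofFn a)).Finite :=
    fun a => hPW.subset (fun w hw => hw.1)
  have hmem : ∀ w, w ∈ minimalPerms d n ↔ ∃ a ∈ S, w ∈ minimalPermsAsc n (List.ofFn a) := by
    intro w
    constructor
    · rintro ⟨hw, hm⟩
      set L : List ℕ := (runs w).map List.length with hL
      have hnd : w.Nodup := hw.2.1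
      have hasc : HasAscentSeq w L := hasAscentSeq_runs hnd
      have hdc : dCount w + L.length = w.length := dCount_of_hasAscentSeq hasc
      have hdw : dCount w = d := by rw [← descents_card_eq_dCount]; exact hm.1
      have hLlen : L.length = k := by rw [hw.1] at hdc; omega
      set a : Fin k → ℕ := fun i => L.get (Fin.cast hLlen.symm i) with ha
      have hofn : List.ofFn a = L := by
        apply List.ext_getElem (by simp [hLlen])
        intro i hi1 hi2
        simp [ha, List.getElem_ofFn, List.get_eq_getElem]
      have hLsum : L.sum = n := by
        have := List.length_flatten (L := runs w)
        rw [runs_flatten w, hw.1] at this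
        rw [hL, ← this]
      refine ⟨a, ?_, hw, ?_, by rw [hofn]; exact hasc⟩
      · rw [hS, Finset.mem_filter]
        constructor
        · rw [Finset.Nat.mem_antidiagonalTuple]
          rw [← List.sum_ofFn, hofn, hLsum]
        · intro i
          have h2b := runs_two hw hm
          have hi : (i : ℕ) < L.length := by rw [hLlen]; exact i.2
          have hi' : (i : ℕ) < (runs w).length := by simpa [hL] using hi
          have hai : a i = ((runs w)[(i : ℕ)]'hi').length := by
            simp [ha, hL, List.get_eq_getElem]
          rw [hai]
          exact h2b _ (List.getElem_mem _)
      · show MinimalPerm (descents w).card w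
        rw [hm.1]; exact hm
    · rintro ⟨a, haS, hw, hmin, hasc⟩
      have hdc := dCount_of_hasAscentSeq hasc
      have hklen : (List.ofFn a).length = k := by simp
      have hcard : (descents w).card = d := by
        rw [descents_card_eq_dCount]
        rw [hw.1, hklen] at hdc
        omega
      exact ⟨hw, hcard ▸ hmin⟩
  have hdisj : ∀ a ∈ S, ∀ b ∈ S, a ≠ b →
      Disjoint ((hAfin a).toFinset) ((hAfin b).toFinset) := by
    intro a _ b _ hab
    rw [Finset.disjoint_left]
    intro w hwa hwb
    rw [Set.Finite.mem_toFinset] at hwa hwb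
    apply hab
    have e1 := hasAscentSeq_unique hwa.2.2
    have e2 := hasAscentSeq_unique hwb.2.2
    exact List.ofFn_injective (e1.trans e2.symm)
  have hTeq : hFfin.toFinset = S.biUnion (fun a => (hAfin a).toFinset) := by
    ext w
    simp only [Set.Finite.mem_toFinset, Finset.mem_biUnion]
    rw [hmem w]
  rw [fCount, Set.ncard_eq_toFinset_card _ hFfin, hTeq, Finset.card_biUnion hdisj]
  apply Finset.sum_congr rfl
  intro a _
  rw [FCount, Set.ncard_eq_toFinset_card _ (hAfin a)]
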